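/- arXiv:0910.4419 — 3 statements merged into one kernel-verified Lean document; each statement's English description precedes it below -/
import Mathlib

section
/- Let A and B be groups, let M be an m×m idempotent matrix over ℂ[A] and N an n×n idempotent matrix over ℂ[B]. Define HS(M)(a) = Σ_i Σ_{t ∈ [a]} (M_{ii})(t) where [a] is the conjugacy class of a, and similarly for N. Then the Kronecker product M⊗N, viewed as an idempotent matrix over ℂ[A×B] via the isomorphism ℂ[A]⊗ℂ[B] ≅ ℂ[A×B], satisfies HS(M⊗N)(a,b) = HS(M)(a)·HS(N)(b) for all (a,b) ∈ A×B. -/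
lemma isConj_prod_iff {A B : Type*} [Group A] [Group B] {a u : A} {b v : B} :
    IsConj (a, b) (u, v) ↔ IsConj a u ∧ IsConj b v := by
  simp only [isConj_iff, Prod.exists, Prod.mk_mul_mk, Prod.inv_mk, Prod.mk.injEq]
  constructor
  · rintro ⟨c, d, h1, h2⟩
    exact ⟨⟨c, h1⟩, ⟨d, h2⟩⟩
  · rintro ⟨⟨c, h1⟩, ⟨d, h2⟩⟩
    exact ⟨c, d, h1, h2⟩

lemma finsum_mem_prod_mul {A B : Type*} (g : A →₀ ℂ) (h : B →₀ ℂ)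
    (Sa : Set A) (Sb : Set B) :
    (∑ᶠ t ∈ Sa ×ˢ Sb, g t.1 * h t.2) =
      (∑ᶠ u ∈ Sa, g u) * (∑ᶠ v ∈ Sb, h v) := by
  classical
  set FA : Finset A := g.support.filter (· ∈ Sa) with hFA
  set FB : Finset B := h.support.filter (· ∈ Sb) with hFB
  have h1 : (∑ᶠ t ∈ Sa ×ˢ Sb, g t.1 * h t.2) = ∑ t ∈ FA ×ˢ FB, g t.1 * h t.2 := by
    apply finsum_mem_eq_sum_of_inter_support_eq
    ext ⟨u, v⟩
    simp only [Set.mem_inter_iff, Set.mem_prod, Function.mem_support, Finset.coe_product,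
      hFA, hFB, Finset.coe_filter, Set.mem_setOf_eq, Finsupp.mem_support_iff]
    constructor
    · rintro ⟨⟨hu, hv⟩, hne⟩
      exact ⟨⟨⟨fun h0 => hne (by simp [h0]), hu⟩, fun h0 => hne (by simp [h0]), hv⟩, hne⟩
    · rintro ⟨⟨⟨_, hu⟩, _, hv⟩, hne⟩
      exact ⟨⟨hu, hv⟩, hne⟩
  have h2 : (∑ᶠ u ∈ Sa, g u) = ∑ u ∈ FA, g u := by
    apply finsum_mem_eq_sum_of_inter_support_eq
    ext u
    simp only [Set.mem_inter_iff, Function.mem_support, hFA, Finset.coe_filter,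
      Set.mem_setOf_eq, Finsupp.mem_support_iff]
    tauto
  have h3 : (∑ᶠ v ∈ Sb, h v) = ∑ v ∈ FB, h v := by
    apply finsum_mem_eq_sum_of_inter_support_eq
    ext v
    simp only [Set.mem_inter_iff, Function.mem_support, hFB, Finset.coe_filter,
      Set.mem_setOf_eq, Finsupp.mem_support_iff]
    tauto
  rw [h1, h2, h3, Finset.sum_product, Finset.sum_mul_sum]

lemma tensor_apply {A B : Type*} (g : A →₀ ℂ) (h : B →₀ ℂ) (u : A) (v : B) :
    ((g.sum fun x cx => h.sum fun y cy =>
        (Finsupp.single (x, y) (cx * cy) : (A × B) →₀ ℂ)) (u, v)) = g u * h v := by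
  classical
  rw [Finsupp.sum_apply]
  rw [Finsupp.sum]
  have key : ∀ x ∈ g.support,
      ((h.sum fun y cy => (Finsupp.single (x, y) (g x * cy) : (A × B) →₀ ℂ)) (u, v))
        = if x = u then g x * h v else 0 := by
    intro x _
    rw [Finsupp.sum_apply, Finsupp.sum]
    have : ∀ y ∈ h.support,
        (Finsupp.single (x, y) (g x * h y) : (A × B) →₀ ℂ) (u, v)
          = if x = u ∧ y = v then g x * h y else 0 := by
      intro y _
      rw [Finsupp.single_apply]
      simp [Prod.ext_iff]
    rw [Finset.sum_congr rfl this]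
    by_cases hx : x = u
    · subst hx
      simp only [true_and, if_true]
      by_cases hv : v ∈ h.support
      · rw [Finset.sum_ite_eq' h.support v (fun y => g x * h y)]
        simp [hv]
      · rw [Finset.sum_ite_eq' h.support v (fun y => g x * h y)]
        simp [hv, Finsupp.notMem_support_iff.mp hv]
    · simp [hx]
  rw [Finset.sum_congr rfl key]
  by_cases hu : u ∈ g.support
  · rw [Finset.sum_ite_eq' g.support u (fun x => g x * h v)]
    simp [hu]
  · rw [Finset.sum_ite_eq' g.support u (fun x => g x * h v)]
    simp [hu, Finsupp.notMem_support_iff.mp hu]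

/-- Multiplicativity of the Hattori–Stallings trace under Kronecker products: for
idempotent matrices `M` over `ℂ[A]` and `N` over `ℂ[B]`, the Kronecker product,
viewed over `ℂ[A × B]` via `x ⊗ y ↦ ∑ x(a) y(b) · (a,b)`, satisfies
`HS(M ⊗ N)(a, b) = HS(M)(a) · HS(N)(b)`. -/
theorem stmt_7 {A B : Type*} [Group A] [Group B] {m n : ℕ}
    (M : Matrix (Fin m) (Fin m) (MonoidAlgebra ℂ A))
    (N : Matrix (Fin n) (Fin n) (MonoidAlgebra ℂ B))
    (hM : M * M = M) (hN : N * N = N) (a : A) (b : B) :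
    (∑ p : Fin m × Fin n, ∑ᶠ t ∈ {t : A × B | IsConj (a, b) t},
        ((M p.1 p.1).coeff.sum fun x cx => (N p.2 p.2).coeff.sum fun y cy =>
          (Finsupp.single (x, y) (cx * cy) : (A × B) →₀ ℂ)) t) =
      (∑ i, ∑ᶠ t ∈ {t : A | IsConj a t}, (M i i).coeff t) *
        (∑ j, ∑ᶠ t ∈ {t : B | IsConj b t}, (N j j).coeff t) := by
  have hset : {t : A × B | IsConj (a, b) t} =
      {t : A | IsConj a t} ×ˢ {t : B | IsConj b t} := by
    ext ⟨u, v⟩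
    simp [isConj_prod_iff, Set.mem_prod]
  rw [Finset.sum_mul_sum, ← Finset.sum_product', Finset.univ_product_univ]
  apply Finset.sum_congr rfl
  rintro ⟨i, j⟩ _
  rw [hset, ← finsum_mem_prod_mul (M i i).coeff (N j j).coeff]
  apply finsum_mem_congr rfl
  rintro ⟨u, v⟩ _
  exact tensor_apply (M i i).coeff (N j j).coeff u v
end

section
/- Let G be a group and M an n×n idempotent matrix over ℂ[G] with only finitely many group elements appearing with nonzero coefficient among all entries. Then the sum over all conjugacy classes [s] of G of HS(M)(s) equals the ordinary trace of the idempotent complex matrix ε(M), where ε is the augmentation; in particular this sum is a nonnegative integer. -/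
open Finset in
private lemma aug_eq_sum {G : Type*} [Group G] (f : MonoidAlgebra ℂ G) :
    (MonoidAlgebra.lift ℂ ℂ G 1) f = ∑ t ∈ f.coeff.support, f.coeff t := by
  rw [MonoidAlgebra.lift_apply]
  simp [Finsupp.sum]

open Finset Set in
private lemma class_finsum_eq {G : Type*} [Group G] (f : MonoidAlgebra ℂ G)
    (c : ConjClasses G) [DecidableEq (ConjClasses G)] :
    (∑ᶠ t ∈ {t : G | ConjClasses.mk t = c}, f.coeff t)
      = ∑ t ∈ f.coeff.support.filter (fun t => ConjClasses.mk t = c), f.coeff t := by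
  apply finsum_mem_eq_sum_of_inter_support_eq
  have hsupp : Function.support (⇑f.coeff) = ↑f.coeff.support := by
    ext t; simp [Function.mem_support]
  rw [hsupp]
  ext t
  simp only [Set.mem_inter_iff, Set.mem_setOf_eq, Finset.coe_filter, Finset.mem_coe,
    Finset.mem_filter]
  tauto

open Finset Set in
private lemma conj_sum_eq {G : Type*} [Group G] (f : MonoidAlgebra ℂ G) :
    (∑ᶠ c : ConjClasses G, ∑ᶠ t ∈ {t : G | ConjClasses.mk t = c}, f.coeff t)
      = ∑ t ∈ f.coeff.support, f.coeff t := by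
  classical
  calc (∑ᶠ c : ConjClasses G, ∑ᶠ t ∈ {t : G | ConjClasses.mk t = c}, f.coeff t)
      = ∑ᶠ c : ConjClasses G,
          ∑ t ∈ f.coeff.support.filter (fun t => ConjClasses.mk t = c), f.coeff t := by
        exact finsum_congr fun c => class_finsum_eq f c
    _ = ∑ c ∈ f.coeff.support.image ConjClasses.mk,
          ∑ t ∈ f.coeff.support.filter (fun t => ConjClasses.mk t = c), f.coeff t := by
        apply finsum_eq_sum_of_support_subset
        intro c hc
        simp only [Function.mem_support, ne_eq] at hc
        by_contra hmem
        apply hc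
        rw [Finset.filter_false_of_mem, Finset.sum_empty]
        intro t ht hmk
        exact hmem (hmk ▸ Finset.mem_image_of_mem _ ht)
    _ = ∑ t ∈ f.coeff.support.filter (fun t => ConjClasses.mk t ∈ f.coeff.support.image ConjClasses.mk),
          f.coeff t := Finset.sum_fiberwise_eq_sum_filter _ _ _ _
    _ = ∑ t ∈ f.coeff.support, f.coeff t := by
        congr 1
        apply Finset.filter_true_of_mem
        intro t ht
        exact Finset.mem_image_of_mem _ ht

/-- For an idempotent matrix `M` over `ℂ[G]` whose entries involve only finitely many
group elements, the sum over all conjugacy classes of `HS(M)(s)` equals the trace of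
the idempotent complex matrix obtained by applying the augmentation entrywise; in
particular this sum is a nonnegative integer. -/
theorem stmt_8 {G : Type*} [Group G] {n : ℕ}
    (M : Matrix (Fin n) (Fin n) (MonoidAlgebra ℂ G)) (hM : M * M = M)
    (hfin : (⋃ i, ⋃ j, ((M i j).coeff.support : Set G)).Finite) :
    (∑ᶠ c : ConjClasses G, ∑ i, ∑ᶠ t ∈ {t : G | ConjClasses.mk t = c}, (M i i).coeff t) =
        (M.map (MonoidAlgebra.lift ℂ ℂ G 1)).trace ∧
      ∃ r : ℕ, (M.map (MonoidAlgebra.lift ℂ ℂ G 1)).trace = (r : ℂ) := by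
  classical
  constructor
  · -- swap the finite sum and the finsum
    have hswap : (∑ᶠ c : ConjClasses G, ∑ i, ∑ᶠ t ∈ {t : G | ConjClasses.mk t = c}, (M i i).coeff t)
        = ∑ i, ∑ᶠ c : ConjClasses G, ∑ᶠ t ∈ {t : G | ConjClasses.mk t = c}, (M i i).coeff t := by
      apply finsum_sum_comm
      intro i _
      apply Set.Finite.subset (((M i i).coeff.support.finite_toSet).image ConjClasses.mk)
      intro c hc
      simp only [Function.mem_support, ne_eq] at hc
      by_contra hmem
      apply hc
      rw [class_finsum_eq, Finset.filter_false_of_mem, Finset.sum_empty]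
      intro t ht hmk
      exact hmem ⟨t, ht, hmk⟩
    rw [hswap]
    rw [Matrix.trace]
    apply Finset.sum_congr rfl
    intro i _
    rw [conj_sum_eq, Matrix.diag_apply, Matrix.map_apply, aug_eq_sum]
  · -- trace of an idempotent complex matrix is a natural number
    set ε := (MonoidAlgebra.lift ℂ ℂ G 1 : MonoidAlgebra ℂ G →ₐ[ℂ] ℂ)
    set E := M.map ε with hE
    have hEE : E * E = E := by
      rw [hE, ← AlgHom.coe_toRingHom ε, ← Matrix.map_mul, hM]
    set φ := Matrix.toLin' E with hφ
    have hφφ : φ ∘ₗ φ = φ := by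
      rw [hφ, ← Matrix.toLin'_mul, hEE]
    obtain ⟨p, hp⟩ := (LinearMap.isProj_iff_isIdempotentElem φ).mpr hφφ
    refine ⟨Module.finrank ℂ p, ?_⟩
    have := hp.trace
    rw [LinearMap.trace_eq_matrix_trace ℂ (Pi.basisFun ℂ (Fin n)) φ,
      LinearMap.toMatrix_eq_toMatrix', hφ, LinearMap.toMatrix'_toLin'] at this
    exact this
end

section
/- Let G be a finite group and s ∈ G. If P is a finitely generated projective ℂ[G]-module represented by an idempotent matrix M over ℂ[G], then HS(P)(1) = dim_ℂ(P)/|G|; in particular the value of the Hattori–Stallings rank at the identity of a finitely generated projective module over the group ring of a finite group is a positive rational with denominator dividing |G|. -/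
open MonoidAlgebra Matrix LinearMap

/-- For a finite group `G` and an idempotent matrix `M` over `ℂ[G]` representing the
finitely generated projective module `P = ℂ[G]ⁿ · M`, the Hattori–Stallings rank at
the identity is `HS(P)(1) = dim_ℂ P / |G|`. -/
theorem stmt_14 {G : Type*} [Group G] [Fintype G] {n : ℕ}
    (M : Matrix (Fin n) (Fin n) (MonoidAlgebra ℂ G)) (hM : M * M = M) :
    ∑ i, (M i i).coeff (1 : G) =
      (Module.finrank ℂ (Submodule.span ℂ (Set.range
          fun x : Fin n → MonoidAlgebra ℂ G => Matrix.vecMul x M)) : ℂ) /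
        (Fintype.card G : ℂ) := by
  classical
  -- the ℂ-linear map x ↦ x ⬝ M
  set f : (Fin n → MonoidAlgebra ℂ G) →ₗ[ℂ] (Fin n → MonoidAlgebra ℂ G) :=
    { toFun := fun x => Matrix.vecMul x M
      map_add' := fun x y => by
        funext j
        simp [Matrix.vecMul, dotProduct, add_mul, Finset.sum_add_distrib]
      map_smul' := fun c x => by
        funext j
        simp [Matrix.vecMul, dotProduct, Finset.smul_sum, smul_mul_assoc] } with hf
  have hff : f ∘ₗ f = f := LinearMap.ext fun x => by
    show Matrix.vecMul (Matrix.vecMul x M) M = Matrix.vecMul x M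
    rw [Matrix.vecMul_vecMul, hM]
  have hproj : LinearMap.IsProj (LinearMap.range f) f := by
    constructor
    · intro x; exact ⟨x, rfl⟩
    · rintro x ⟨y, rfl⟩
      have := congrArg (fun g => g y) hff
      simpa using this
  have hspan : Submodule.span ℂ (Set.range
      fun x : Fin n → MonoidAlgebra ℂ G => Matrix.vecMul x M) = LinearMap.range f := by
    rw [show (Set.range fun x : Fin n → MonoidAlgebra ℂ G => Matrix.vecMul x M)
        = Set.range f from rfl, ← LinearMap.coe_range, Submodule.span_eq]
  haveI : Module.Finite ℂ (MonoidAlgebra ℂ G) :=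
    Module.Finite.of_basis (MonoidAlgebra.basis G ℂ)
  have htr : LinearMap.trace ℂ _ f = (Module.finrank ℂ (LinearMap.range f) : ℂ) :=
    hproj.trace
  -- compute the trace via the basis indexed by Fin n × G
  let b : Module.Basis (Σ _ : Fin n, G) ℂ (Fin n → MonoidAlgebra ℂ G) :=
    Pi.basis fun _ : Fin n => MonoidAlgebra.basis G ℂ
  have htr2 : LinearMap.trace ℂ _ f
      = (Fintype.card G : ℂ) * ∑ i, (M i i).coeff (1 : G) := by
    rw [LinearMap.trace_eq_matrix_trace ℂ b f, Matrix.trace]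
    have hdiag : ∀ p : Σ _ : Fin n, G,
        LinearMap.toMatrix b b f p p = (M p.1 p.1).coeff (1 : G) := by
      rintro ⟨i, g⟩
      rw [LinearMap.toMatrix_apply]
      have hb : b ⟨i, g⟩ = Pi.single i (MonoidAlgebra.single g (1 : ℂ)) := by
        simp [b, Pi.basis_apply, MonoidAlgebra.basis_apply]
      rw [Pi.basis_repr, hb]
      have : f (Pi.single i (MonoidAlgebra.single g (1 : ℂ))) i
          = MonoidAlgebra.single g (1 : ℂ) * M i i := by
        simp [hf, Matrix.vecMul, dotProduct]
        rw [Finset.sum_eq_single i]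
        · simp
        · intro k _ hk; simp [Pi.single_apply, hk]
        · simp
      rw [this]
      show (MonoidAlgebra.single g (1 : ℂ) * M i i).coeff g = (M i i).coeff (1 : G)
      rw [MonoidAlgebra.coeff_single_mul_apply]
      simp
    simp only [Matrix.diag_apply, hdiag]
    rw [← Finset.univ_sigma_univ, Finset.sum_sigma]
    simp [Finset.sum_const, Finset.mul_sum, mul_comm]
  rw [hspan, ← htr, htr2]
  have hcard : (Fintype.card G : ℂ) ≠ 0 := by
    exact_mod_cast Nat.cast_ne_zero.mpr Fintype.card_ne_zero
  rw [mul_comm, mul_div_assoc, div_self hcard, mul_one]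
end
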